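/- The abelianization G/[G,G] of the group G is isomorphic to ℤ² × (ℤ/2ℤ)². -/

import Mathlib

open scoped commutatorElement
/-- The underlying set of the group `G` is `ℤ⁴`. -/
def G : Type := ℤ × ℤ × ℤ × ℤ

namespace G

/-- Build an element of `G` from four integers. -/
def mk (a b c d : ℤ) : G := (a, b, c, d)

/-- The twisted multiplication
`(a,b,c,d)·(a',b',c',d') = (a+a', b+b', c+(−1)^a·c', d+(−1)^a·d')`. -/
def mul' (x y : G) : G :=
  mk (x.1 + y.1) (x.2.1 + y.2.1)
    (x.2.2.1 + (x.1.negOnePow : ℤ) * y.2.2.1)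
    (x.2.2.2 + (x.1.negOnePow : ℤ) * y.2.2.2)

/-- The inverse `(a,b,c,d)⁻¹ = (−a, −b, −(−1)^a·c, −(−1)^a·d)`. -/
def inv' (x : G) : G :=
  mk (-x.1) (-x.2.1) (-((x.1.negOnePow : ℤ) * x.2.2.1)) (-((x.1.negOnePow : ℤ) * x.2.2.2))

instance instGroup : Group G where
  mul := mul'
  one := mk 0 0 0 0
  inv := inv'
  mul_assoc x y z := by
    show mul' (mul' x y) z = mul' x (mul' y z)
    obtain ⟨a, b, c, d⟩ := x
    obtain ⟨a', b', c', d'⟩ := y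
    obtain ⟨a'', b'', c'', d''⟩ := z
    simp only [mul', mk, Int.negOnePow_add, Units.val_mul]
    exact Prod.ext (by ring) (Prod.ext (by ring) (Prod.ext (by ring) (by ring)))
  one_mul x := by
    show mul' (mk 0 0 0 0) x = x
    obtain ⟨a, b, c, d⟩ := x
    simp [mul', mk]; rfl
  mul_one x := by
    show mul' x (mk 0 0 0 0) = x
    obtain ⟨a, b, c, d⟩ := x
    simp [mul', mk]; rfl
  inv_mul_cancel x := by
    show mul' (inv' x) x = mk 0 0 0 0
    obtain ⟨a, b, c, d⟩ := x
    simp only [mul', inv', mk, Int.negOnePow_neg]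
    exact Prod.ext (by ring) (Prod.ext (by ring) (Prod.ext (by ring) (by ring)))

def g₀ : G := mk 1 0 0 0
def g₁ : G := mk 0 1 0 0
def g₂ : G := mk 0 0 1 0
def g₃ : G := mk 0 0 0 1

lemma mul_def (x y : G) : x * y = mul' x y := rfl
lemma inv_def (x : G) : x⁻¹ = inv' x := rfl
lemma one_def : (1 : G) = mk 0 0 0 0 := rfl

lemma negOnePow_cast_zmod2 (a : ℤ) : (((a.negOnePow : ℤ) : ZMod 2)) = 1 := by
  rcases Int.even_or_odd a with h | h
  · rw [Int.negOnePow_even a h]; norm_num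
  · rw [Int.negOnePow_odd a h]; push_cast; decide

/-- The abelianization map. -/
def φ : G →* Multiplicative (ℤ × ℤ × ZMod 2 × ZMod 2) where
  toFun x := Multiplicative.ofAdd (x.1, x.2.1, ((x.2.2.1 : ℤ) : ZMod 2), ((x.2.2.2 : ℤ) : ZMod 2))
  map_one' := by
    rw [one_def]; simp [mk]
  map_mul' x y := by
    obtain ⟨a, b, c, d⟩ := x
    obtain ⟨a', b', c', d'⟩ := y
    erw [mul_def]
    simp only [mul', mk]
    rw [← ofAdd_add]
    congr 1
    simp only [Prod.mk_add_mk]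
    refine Prod.ext rfl (Prod.ext rfl (Prod.ext ?_ ?_)) <;>
      · push_cast
        rw [negOnePow_cast_zmod2]
        ring

/-- Embedding of the `c`-axis. -/
def e₂ : Multiplicative ℤ →* G where
  toFun m := mk 0 0 m.toAdd 0
  map_one' := rfl
  map_mul' x y := by
    rw [mul_def]
    simp [mul', mk]
    rfl

/-- Embedding of the `d`-axis. -/
def e₃ : Multiplicative ℤ →* G where
  toFun m := mk 0 0 0 m.toAdd
  map_one' := rfl
  map_mul' x y := by
    rw [mul_def]
    simp [mul', mk]
    rfl

lemma comm₂ : mk 0 0 2 0 = ⁅g₂, g₀⁆ := by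
  show _ = g₂ * g₀ * g₂⁻¹ * g₀⁻¹
  simp only [mul_def, inv_def]
  simp only [mul_def, inv_def, mul', inv', g₀, g₂, mk]
  norm_num
  rfl

lemma comm₃ : mk 0 0 0 2 = ⁅g₃, g₀⁆ := by
  show _ = g₃ * g₀ * g₃⁻¹ * g₀⁻¹
  simp only [mul_def, inv_def]
  simp only [mul_def, inv_def, mul', inv', g₀, g₃, mk]
  norm_num
  rfl

end G

/-- The abelianization `G/[G,G]` is isomorphic to `ℤ² × (ℤ/2ℤ)²`. -/
theorem G_abelianization :
    Nonempty (Abelianization G ≃* Multiplicative (ℤ × ℤ × ZMod 2 × ZMod 2)) := by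
  let ψ := Abelianization.lift G.φ
  have hsurj_of : Function.Surjective (Abelianization.of : G → Abelianization G) :=
    fun x => QuotientGroup.induction_on x fun g => ⟨g, rfl⟩
  have hψof : ∀ g : G, ψ (Abelianization.of g) = G.φ g := fun g => rfl
  have hinj : Function.Injective ψ := by
    rw [injective_iff_map_eq_one]
    intro x hx
    obtain ⟨g, rfl⟩ := hsurj_of x
    obtain ⟨a, b, c, d⟩ := g
    erw [hψof] at hx
    have h := congrArg Multiplicative.toAdd hx
    simp only [G.φ, MonoidHom.coe_mk, OneHom.coe_mk, toAdd_ofAdd, toAdd_one] at h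
    obtain ⟨ha, hb, hc, hd⟩ : a = 0 ∧ b = 0 ∧ ((c : ZMod 2) = 0) ∧ ((d : ZMod 2) = 0) := by
      refine ⟨congrArg Prod.fst h, ?_, ?_, ?_⟩
      · exact congrArg (fun p => p.2.1) h
      · exact congrArg (fun p => p.2.2.1) h
      · exact congrArg (fun p => p.2.2.2) h
    obtain ⟨m, hm⟩ := (ZMod.intCast_zmod_eq_zero_iff_dvd c 2).mp hc
    obtain ⟨n, hn⟩ := (ZMod.intCast_zmod_eq_zero_iff_dvd d 2).mp hd
    push_cast at hm hn
    subst ha hb hm hn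
    have hsplit : (G.mk 0 0 (2 * m) (2 * n) : G)
        = G.e₂ (Multiplicative.ofAdd (2 * m)) * G.e₃ (Multiplicative.ofAdd (2 * n)) := by
      rw [G.mul_def]
      show G.mk 0 0 (2 * m) (2 * n) = G.mul' (G.mk 0 0 (2 * m) 0) (G.mk 0 0 0 (2 * n))
      simp only [G.e₂, G.e₃, G.mul', G.mk, MonoidHom.coe_mk, OneHom.coe_mk, toAdd_ofAdd,
        Int.negOnePow_zero, Units.val_one]
      exact Prod.ext (by ring) (Prod.ext (by ring) (Prod.ext (by ring) (by ring)))
    show Abelianization.of (G.mk 0 0 (2 * m) (2 * n)) = 1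
    have h2m : Multiplicative.ofAdd (2 * m) = Multiplicative.ofAdd (2 : ℤ) ^ m := by
      rw [← ofAdd_zsmul, smul_eq_mul, mul_comm]
    have h2n : Multiplicative.ofAdd (2 * n) = Multiplicative.ofAdd (2 : ℤ) ^ n := by
      rw [← ofAdd_zsmul, smul_eq_mul, mul_comm]
    have he₂ : G.e₂ (Multiplicative.ofAdd (2 : ℤ)) = ⁅G.g₂, G.g₀⁆ := G.comm₂
    have he₃ : G.e₃ (Multiplicative.ofAdd (2 : ℤ)) = ⁅G.g₃, G.g₀⁆ := G.comm₃
    rw [hsplit]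
    simp only [h2m, h2n, map_zpow, he₂, he₃, map_mul, map_commutatorElement]
    rw [commutatorElement_eq_one_iff_commute.mpr (Commute.all _ _),
      commutatorElement_eq_one_iff_commute.mpr (Commute.all _ _)]
    simp
  have hsurj : Function.Surjective ψ := by
    intro y
    refine ⟨Abelianization.of
      (G.mk y.toAdd.1 y.toAdd.2.1 y.toAdd.2.2.1.val y.toAdd.2.2.2.val), ?_⟩
    rw [hψof]
    simp only [G.φ, G.mk, MonoidHom.coe_mk, OneHom.coe_mk]
    conv_rhs => rw [← ofAdd_toAdd y]
    congr 1
    refine Prod.ext rfl (Prod.ext rfl (Prod.ext ?_ ?_)) <;>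
      · push_cast
        rw [ZMod.natCast_val, ZMod.cast_id]
  exact ⟨MulEquiv.ofBijective ψ ⟨hinj, hsurj⟩⟩
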